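/- Let I ⊆ ℝ be a nonempty open interval and let f : ℝ → ℝ be twice differentiable on I with f''(t) ≠ 0 for every t ∈ I. Then there do not exist real constants b₁, b₂, b₃, c₁, c₂, c₃ such that for all t ∈ I both f''(t)·(f(t) + b₂ + (b₁ − c₂)·t − c₁·t²) = 0 and f''(t)·(t·f(t) − b₃ + (c₃ − b₂)·t + c₂·t²) = 0 hold. -/

import Mathlib

/-- If `f` is twice differentiable on a nonempty open interval `I` with `f''` nowhere
vanishing on `I`, then there are no constants `b₁, b₂, b₃, c₁, c₂, c₃` making
`f''·(f + b₂ + (b₁−c₂)t − c₁t²)` and `f''·(t·f − b₃ + (c₃−b₂)t + c₂t²)` vanish on `I`. -/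
theorem statement3 (I : Set ℝ) (hIopen : IsOpen I) (hIconn : I.OrdConnected)
    (hIne : I.Nonempty) (f : ℝ → ℝ)
    (hf : ∀ t ∈ I, DifferentiableAt ℝ f t)
    (hf' : ∀ t ∈ I, DifferentiableAt ℝ (deriv f) t)
    (hf'' : ∀ t ∈ I, deriv (deriv f) t ≠ 0) :
    ¬ ∃ b₁ b₂ b₃ c₁ c₂ c₃ : ℝ, ∀ t ∈ I,
        deriv (deriv f) t * (f t + b₂ + (b₁ - c₂) * t - c₁ * t ^ 2) = 0 ∧
        deriv (deriv f) t * (t * f t - b₃ + (c₃ - b₂) * t + c₂ * t ^ 2) = 0 := by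
  rintro ⟨b₁, b₂, b₃, c₁, c₂, c₃, h⟩
  -- from the two equations and f'' ≠ 0, f is a quadratic polynomial on I
  have hquad : ∀ t ∈ I, f t = c₁ * t ^ 2 + (c₂ - b₁) * t - b₂ := by
    intro t ht
    have h1 := (h t ht).1
    have h2 := hf'' t ht
    have := (mul_eq_zero.mp h1).resolve_left h2
    linarith
  have hcub : ∀ t ∈ I, c₁ * t ^ 3 + (2 * c₂ - b₁) * t ^ 2 + (c₃ - 2 * b₂) * t - b₃ = 0 := by
    intro t ht
    have h2 := (h t ht).2
    have h2' := (mul_eq_zero.mp h2).resolve_left (hf'' t ht)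
    have hq := hquad t ht
    linear_combination h2' - t * hq
  obtain ⟨t₀, ht₀⟩ := hIne
  obtain ⟨ε, hε, hball⟩ := Metric.isOpen_iff.mp hIopen t₀ ht₀
  -- four points in I
  have hmem : ∀ i : ℝ, 0 ≤ i → i ≤ 3 → t₀ + i * (ε / 4) ∈ I := by
    intro i hi0 hi3
    apply hball
    simp only [Metric.mem_ball, Real.dist_eq]
    have he : t₀ + i * (ε / 4) - t₀ = i * (ε / 4) := by ring
    rw [he, abs_of_nonneg (by positivity)]
    nlinarith
  have e0 := hcub _ (hmem 0 (by norm_num) (by norm_num))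
  have e1 := hcub _ (hmem 1 (by norm_num) (by norm_num))
  have e2 := hcub _ (hmem 2 (by norm_num) (by norm_num))
  have e3 := hcub _ (hmem 3 (by norm_num) (by norm_num))
  -- third finite difference kills the cubic coefficient
  have hc₁ : c₁ = 0 := by
    have hd : (ε / 4) ^ 3 ≠ 0 := by positivity
    have : c₁ * (6 * (ε / 4) ^ 3) = 0 := by linear_combination e3 - 3 * e2 + 3 * e1 - e0
    have := mul_eq_zero.mp this
    rcases this with h | h
    · exact h
    · exact absurd h (by positivity)
  -- so f is affine on I; compute its second derivative at t₀
  have hlin : ∀ t ∈ I, f t = (c₂ - b₁) * t - b₂ := by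
    intro t ht
    rw [hquad t ht, hc₁]; ring
  have hEq : ∀ t ∈ I, deriv f t = c₂ - b₁ := by
    intro t ht
    have hev : f =ᶠ[nhds t] fun s => (c₂ - b₁) * s - b₂ :=
      Filter.eventuallyEq_of_mem (hIopen.mem_nhds ht) hlin
    rw [hev.deriv_eq]
    rw [deriv_fun_sub (by fun_prop) (by fun_prop), deriv_const, deriv_const_mul _ (by fun_prop)]
    simp
  have hev2 : deriv f =ᶠ[nhds t₀] fun _ => c₂ - b₁ :=
    Filter.eventuallyEq_of_mem (hIopen.mem_nhds ht₀) hEq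
  have : deriv (deriv f) t₀ = 0 := by
    rw [hev2.deriv_eq, deriv_const]
  exact hf'' t₀ ht₀ this
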